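/- arXiv:2407.21562 — 4 statements merged into one kernel-verified Lean document; each statement's English description precedes it below -/
import Mathlib

section
/- Let A be a set of ordinals and let W be the set of ω-limits of A. Then the set {a ∈ A : w < a for every w ∈ W} is finite. (In particular, every infinite set of ordinals has at least one ω-limit.) -/
open Set

/-- `x` is a limit point of the set `B` of ordinals: `x` is a limit ordinal and
`B ∩ x` is unbounded in `x`. -/
def limitPts (B : Set Ordinal) : Set Ordinal :=
  {x : Ordinal | Order.IsSuccLimit x ∧ ∀ y < x, ∃ b ∈ B, y < b ∧ b < x}

/-- `CBge A α` is `A_{≥α}`, the set of elements of `A` of Cantor–Bendixson rank `≥ α`: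
`A_{≥α} = A \ ⋃_{β<α} A_β` where `A_β = A_{≥β} \ (A_{≥β})*`. -/
noncomputable def CBge (A : Set Ordinal) : Ordinal → Set Ordinal :=
  Ordinal.lt_wf.fix (C := fun _ => Set Ordinal) fun α IH =>
    A \ ⋃ (β : Ordinal), ⋃ (h : β < α), (IH β h \ limitPts (IH β h))

/-- `CBpart A β` is `A_β`, the set of elements of `A` of Cantor–Bendixson rank exactly `β`. -/
noncomputable def CBpart (A : Set Ordinal) (β : Ordinal) : Set Ordinal :=
  CBge A β \ limitPts (CBge A β)

/-- The set of ω-limits of a set `B` of ordinals: suprema of strictly increasing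
ℕ-indexed sequences of elements of `B`. -/
def omegaLimits (B : Set Ordinal) : Set Ordinal :=
  {l : Ordinal | ∃ f : ℕ → Ordinal, StrictMono f ∧ (∀ n, f n ∈ B) ∧ l = ⨆ n, f n}

/-- `Wpart A β` is `W_β(A)`, the set of ω-limits of `A_β`. -/
noncomputable def Wpart (A : Set Ordinal) (β : Ordinal) : Set Ordinal :=
  omegaLimits (CBpart A β)

/-- `Sseq A β lam` is `S_β^λ(A) = {x ∈ A_β : sup(W_β(A) ∩ λ) < x < λ}`. -/
noncomputable def Sseq (A : Set Ordinal) (β lam : Ordinal) : Set Ordinal :=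
  {x : Ordinal | x ∈ CBpart A β ∧ sSup (Wpart A β ∩ Set.Iio lam) < x ∧ x < lam}

/-- For a set `A` of ordinals, the set of elements of `A` that lie strictly
above every ω-limit of `A` is finite. -/
theorem finite_above_all_omegaLimits (A : Set Ordinal) :
    {a | a ∈ A ∧ ∀ w ∈ omegaLimits A, w < a}.Finite := by
  by_contra hinf
  rw [← Set.not_infinite, not_not] at hinf
  set S := {a | a ∈ A ∧ ∀ w ∈ omegaLimits A, w < a} with hS
  -- get an injective sequence in S
  let e := hinf.natEmbedding
  have hmem : ∀ n, (e n : Ordinal) ∈ S := fun n => (e n).2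
  -- extract a monotone subsequence
  obtain ⟨g, hg⟩ := ((Set.IsWF.of_wellFoundedLT univ).isPWO).exists_monotone_subseq
    (f := fun n => (e n : Ordinal)) (fun n => mem_univ _)
  have hmono : Monotone (fun n => (e (g n) : Ordinal)) := fun m n h => hg h
  have hinj : Function.Injective (fun n => (e (g n) : Ordinal)) := by
    intro m n h
    exact g.injective (Subtype.val_injective.comp e.injective h)
  have hsm : StrictMono (fun n => (e (g n) : Ordinal)) := hmono.strictMono_of_injective hinj
  set f : ℕ → Ordinal := fun n => (e (g n) : Ordinal)
  have hfS : ∀ n, f n ∈ S := fun n => hmem (g n)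
  have hlam : (⨆ n, f n) ∈ omegaLimits A :=
    ⟨f, hsm, fun n => (hfS n).1, rfl⟩
  have h1 : (⨆ n, f n) < f 0 := (hfS 0).2 _ hlam
  have h2 : f 0 ≤ ⨆ n, f n := le_ciSup (Ordinal.bddAbove_range f) 0
  exact absurd h2 (not_le.2 h1)
end

section
/- Let A be a set of ordinals, let γ < β be ordinals, and let a ∈ A_β. Then a is a limit point of A_γ; that is, A_γ ∩ a is unbounded in a. -/
open Set

lemma CBge_eq (A : Set Ordinal) (α : Ordinal) :
    CBge A α = A \ ⋃ (β : Ordinal), ⋃ (_ : β < α), CBpart A β := by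
  rw [CBge, WellFounded.fix_eq]
  rfl

lemma CBge_mono (A : Set Ordinal) {α α' : Ordinal} (h : α ≤ α') :
    CBge A α' ⊆ CBge A α := by
  rw [CBge_eq, CBge_eq]
  intro x hx
  refine ⟨hx.1, fun hmem => hx.2 ?_⟩
  simp only [Set.mem_iUnion] at hmem ⊢
  obtain ⟨β, hβ, hb⟩ := hmem
  exact ⟨β, hβ.trans_le h, hb⟩

lemma mem_CBge_not_CBpart (A : Set Ordinal) {α α' : Ordinal} (h : α < α') {x : Ordinal}
    (hx : x ∈ CBge A α') : x ∉ CBpart A α := by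
  rw [CBge_eq] at hx
  intro hmem
  exact hx.2 (Set.mem_iUnion.2 ⟨α, Set.mem_iUnion.2 ⟨h, hmem⟩⟩)

/-- If `γ < β` and `a ∈ A_β`, then `a` is a limit point of `A_γ`;
in particular `A_γ ∩ a` is unbounded in `a`. -/
theorem CBpart_mem_limitPts_of_lt (A : Set Ordinal) (γ β : Ordinal) (hγβ : γ < β)
    (a : Ordinal) (ha : a ∈ CBpart A β) :
    a ∈ limitPts (CBpart A γ) ∧ ∀ y < a, ∃ b ∈ CBpart A γ, y < b ∧ b < a := by
  have haγ1 : a ∈ CBge A (γ + 1) := CBge_mono A (Order.add_one_le_of_lt hγβ) ha.1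
  have haγ : a ∈ CBge A γ := CBge_mono A (le_of_lt (Order.lt_add_one_iff.2 le_rfl)) haγ1
  have hnp : a ∉ CBpart A γ := mem_CBge_not_CBpart A (Order.lt_add_one_iff.2 le_rfl) haγ1
  have hlim : a ∈ limitPts (CBge A γ) := by
    by_contra hc
    exact hnp ⟨haγ, hc⟩
  have key : ∀ y < a, ∃ b ∈ CBpart A γ, y < b ∧ b < a := by
    intro y hy
    have hne : (CBge A γ ∩ Set.Ioo y a).Nonempty := by
      obtain ⟨b, hb, hyb, hba⟩ := hlim.2 y hy
      exact ⟨b, hb, hyb, hba⟩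
    set b := Ordinal.lt_wf.min _ hne with hbdef
    have hbmem : b ∈ CBge A γ ∩ Set.Ioo y a := Ordinal.lt_wf.min_mem _ hne
    refine ⟨b, ⟨hbmem.1, fun hbl => ?_⟩, hbmem.2.1, hbmem.2.2⟩
    obtain ⟨c, hc, hyc, hcb⟩ := hbl.2 y hbmem.2.1
    exact Ordinal.lt_wf.not_lt_min (CBge A γ ∩ Set.Ioo y a) (x := c) ⟨hc, hyc, hcb.trans hbmem.2.2⟩ hcb
  exact ⟨⟨hlim.1, key⟩, key⟩
end

section
/- Let A be a set of ordinals and β an ordinal, and suppose some element of A_β is strictly above every element of W_β(A). Then A_β is nonempty and has a maximum element, and this maximum element is strictly above every element of W_β(A). -/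
open Set

/-- If some element of `A_β` is strictly above every element of `W_β(A)`,
then `A_β` is nonempty and has a maximum element, which is strictly above every element
of `W_β(A)`. -/
theorem CBpart_has_max_of_above_omegaLimits (A : Set Ordinal) (β : Ordinal)
    (h : ∃ a ∈ CBpart A β, ∀ w ∈ Wpart A β, w < a) :
    ∃ m ∈ CBpart A β, (∀ a ∈ CBpart A β, a ≤ m) ∧ ∀ w ∈ Wpart A β, w < m := by
  obtain ⟨a, ha, haw⟩ := h
  by_cases hmax : ∃ m ∈ CBpart A β, ∀ x ∈ CBpart A β, x ≤ m
  · obtain ⟨m, hm, hmle⟩ := hmax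
    exact ⟨m, hm, hmle, fun w hw => lt_of_lt_of_le (haw w hw) (hmle a ha)⟩
  · exfalso
    push_neg at hmax
    have step : ∀ x : {x // x ∈ CBpart A β}, ∃ y : {x // x ∈ CBpart A β}, x.1 < y.1 := by
      rintro ⟨x, hx⟩
      obtain ⟨y, hy, hxy⟩ := hmax x hx
      exact ⟨⟨y, hy⟩, hxy⟩
    choose g hg using step
    let f : ℕ → {x // x ∈ CBpart A β} := fun n => g^[n] ⟨a, ha⟩
    have hmono : StrictMono fun n => (f n).1 := by
      apply strictMono_nat_of_lt_succ
      intro n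
      have : f (n + 1) = g (f n) := Function.iterate_succ_apply' g n _
      rw [this]
      exact hg (f n)
    have hlam : (⨆ n, (f n).1) ∈ Wpart A β :=
      ⟨fun n => (f n).1, hmono, fun n => (f n).2, rfl⟩
    have h1 : a ≤ ⨆ n, (f n).1 := Ordinal.le_iSup (fun n => (f n).1) 0
    exact absurd (haw _ hlam) (not_lt.2 h1)
end

section
/- Let A be a set of ordinals and let γ < β be ordinals. If A_γ has a maximum element m, then a < m for every a ∈ A_β. In particular, if both A_γ and A_β have maximum elements, then max A_γ > max A_β whenever A_β ≠ ∅. -/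
open Set

/-- `CBge` is antitone. -/
lemma CBge_subset (A : Set Ordinal) {γ β : Ordinal} (h : γ ≤ β) :
    CBge A β ⊆ CBge A γ := by
  rw [CBge_eq A β, CBge_eq A γ]
  refine diff_subset_diff_right ?_
  refine iUnion_mono fun δ => iUnion_subset fun hδ => ?_
  exact subset_iUnion_of_subset (lt_of_lt_of_le hδ h) subset_rfl

lemma not_mem_CBpart (A : Set Ordinal) {γ β a : Ordinal} (h : γ < β)
    (ha : a ∈ CBge A β) : a ∉ CBpart A γ := by
  rw [CBge_eq A β] at ha
  intro hc
  exact ha.2 (mem_iUnion.mpr ⟨γ, mem_iUnion.mpr ⟨h, hc⟩⟩)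

/-- If `γ < β` and `A_γ` has a maximum element `m`, then every element of `A_β`
is strictly below `m`; in particular, if `A_β` also has a maximum element, that maximum is
strictly below `m`. -/
theorem max_CBpart_lt_of_rank_lt (A : Set Ordinal) (γ β : Ordinal) (hγβ : γ < β)
    (m : Ordinal) (hm : m ∈ CBpart A γ) (hmax : ∀ a ∈ CBpart A γ, a ≤ m) :
    (∀ a ∈ CBpart A β, a < m) ∧
    (∀ m' ∈ CBpart A β, (∀ a ∈ CBpart A β, a ≤ m') → m' < m) := by
  have key : ∀ a ∈ CBpart A β, a < m := by
    intro a ha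
    have haγ : a ∈ CBge A γ := CBge_subset A hγβ.le ha.1
    have hanp : a ∉ CBpart A γ := not_mem_CBpart A hγβ ha.1
    have halim : a ∈ limitPts (CBge A γ) := by
      by_contra h
      exact hanp ⟨haγ, h⟩
    by_contra hlt
    push_neg at hlt
    have hma : m < a := lt_of_le_of_ne hlt (fun h => hanp (h ▸ hm))
    -- pick the least element of CBge A γ strictly between m and a
    obtain ⟨b, hb, hmb, hba⟩ := halim.2 m hma
    set S : Set Ordinal := {x | x ∈ CBge A γ ∧ m < x ∧ x < a} with hS
    have hSne : S.Nonempty := ⟨b, hb, hmb, hba⟩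
    set c := Ordinal.lt_wf.min S hSne with hc
    have hcS : c ∈ S := Ordinal.lt_wf.min_mem S hSne
    have hcpart : c ∈ CBpart A γ := by
      refine ⟨hcS.1, fun hclim => ?_⟩
      obtain ⟨d, hd, hmd, hdc⟩ := hclim.2 m hcS.2.1
      exact Ordinal.lt_wf.not_lt_min S ⟨hd, hmd, hdc.trans hcS.2.2⟩ hdc
    exact absurd (hmax c hcpart) (not_le.mpr hcS.2.1)
  exact ⟨key, fun m' hm' _ => key m' hm'⟩
end
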